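/- (Discrete variable drift, upper bound.) Let n ∈ ℕ, let (X_t)_{t≥0} be a sequence of random variables taking values in {0, 1, …, n}, adapted to a filtration (F_t)_{t≥0}, with X₀ = x₀ almost surely for a fixed x₀ ∈ {0, …, n}, and let T be the earliest time t ≥ 0 with X_t = 0. Suppose there exists a monotonically increasing function h : {1, …, n} → ℝ_{>0} such that for every t ∈ ℕ, almost surely on the event {t < T}, E[X_t − X_{t+1} | F_t] ≥ h(X_t). Then E[T] ≤ Σ_{i=1}^{x₀} 1/h(i). -/

import Mathlib

open MeasureTheory

lemma drift_key_sum (n : ℕ) (h : ℕ → ℝ) (hpos : ∀ i, 1 ≤ i → i ≤ n → 0 < h i)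
    (hmono : ∀ i j, 1 ≤ i → i ≤ j → j ≤ n → h i ≤ h j)
    (x y : ℕ) (hx1 : 1 ≤ x) (hxn : x ≤ n) (hyn : y ≤ n) :
    ((x : ℝ) - y) / h x ≤ (∑ i ∈ Finset.Icc 1 x, 1 / h i) - ∑ i ∈ Finset.Icc 1 y, 1 / h i := by
  have hIcc : ∀ z : ℕ, Finset.Icc 1 z = Finset.Ioc 0 z := fun z => Finset.Icc_add_one_left_eq_Ioc 0 z
  rw [hIcc x, hIcc y]
  have hhx := hpos x hx1 hxn
  rcases le_total y x with hyx | hxy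
  · have hsplit : (∑ i ∈ Finset.Ioc 0 y, 1 / h i) + ∑ i ∈ Finset.Ioc y x, 1 / h i
        = ∑ i ∈ Finset.Ioc 0 x, 1 / h i :=
      Finset.sum_Ioc_consecutive _ (Nat.zero_le y) hyx
    have hbound : (Finset.Ioc y x).card • (1 / h x) ≤ ∑ i ∈ Finset.Ioc y x, 1 / h i := by
      refine Finset.card_nsmul_le_sum _ _ _ fun i hi => ?_
      rw [Finset.mem_Ioc] at hi
      have hi1 : 1 ≤ i := lt_of_le_of_lt (Nat.zero_le y) hi.1
      exact one_div_le_one_div_of_le (hpos i hi1 (hi.2.trans hxn))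
        (hmono i x hi1 hi.2 hxn)
    rw [Nat.card_Ioc, nsmul_eq_mul] at hbound
    have hcast : ((x - y : ℕ) : ℝ) = (x : ℝ) - y := Nat.cast_sub hyx
    rw [hcast] at hbound
    have : ((x : ℝ) - y) / h x = ((x : ℝ) - y) * (1 / h x) := by ring
    linarith
  · have hsplit : (∑ i ∈ Finset.Ioc 0 x, 1 / h i) + ∑ i ∈ Finset.Ioc x y, 1 / h i
        = ∑ i ∈ Finset.Ioc 0 y, 1 / h i :=
      Finset.sum_Ioc_consecutive _ (Nat.zero_le x) hxy
    have hbound : ∑ i ∈ Finset.Ioc x y, 1 / h i ≤ (Finset.Ioc x y).card • (1 / h x) := by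
      refine Finset.sum_le_card_nsmul _ _ _ fun i hi => ?_
      rw [Finset.mem_Ioc] at hi
      exact one_div_le_one_div_of_le hhx (hmono x i hx1 hi.1.le (hi.2.trans hyn))
    rw [Nat.card_Ioc, nsmul_eq_mul] at hbound
    have hcast : ((y - x : ℕ) : ℝ) = (y : ℝ) - x := Nat.cast_sub hxy
    rw [hcast] at hbound
    have : ((x : ℝ) - y) / h x = -(((y : ℝ) - x) * (1 / h x)) := by ring
    linarith

/-- **Theorem (discrete variable drift, upper bound).** Let `(X_t)` be a process with
values in `{0, …, n}`, adapted to a filtration `(ℱ_t)`, with `X₀ = x₀` a.s., and let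
`T = inf {t | X_t = 0}`. If `h : {1, …, n} → ℝ_{>0}` is monotonically increasing and
for all `t`, a.s. on the event `{t < T}`, `E[X_t − X_{t+1} | ℱ_t] ≥ h(X_t)`, then
`E[T] ≤ Σ_{i=1}^{x₀} 1/h(i)`, where `E[T] = Σ_{t≥0} Pr[T > t]`. -/
theorem discrete_variable_drift_upper_bound
    {Ω : Type*} {m : MeasurableSpace Ω} (μ : Measure Ω) [IsProbabilityMeasure μ]
    (ℱ : Filtration ℕ m) (n : ℕ) (X : ℕ → Ω → ℕ)
    (hbdd : ∀ t ω, X t ω ≤ n)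
    (hadapted : ∀ t, Measurable[ℱ t] (X t))
    (x₀ : ℕ) (hx₀ : x₀ ≤ n) (hX0 : ∀ᵐ ω ∂μ, X 0 ω = x₀)
    (h : ℕ → ℝ)
    (hpos : ∀ i, 1 ≤ i → i ≤ n → 0 < h i)
    (hmono : ∀ i j, 1 ≤ i → i ≤ j → j ≤ n → h i ≤ h j)
    (hdrift : ∀ t : ℕ, ∀ᵐ ω ∂μ, (∀ s ≤ t, X s ω ≠ 0) →
        h (X t ω)
          ≤ (μ[fun ω' => (X t ω' : ℝ) - (X (t + 1) ω' : ℝ) | ℱ t]) ω) :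
    ∑' t : ℕ, μ {ω | ∀ s ≤ t, X s ω ≠ 0}
      ≤ ENNReal.ofReal (∑ i ∈ Finset.Icc 1 x₀, 1 / h i) := by
  classical
  set g : ℕ → ℝ := fun x => ∑ i ∈ Finset.Icc 1 x, 1 / h i with hgdef
  set A : ℕ → Set Ω := fun t => {ω | ∀ s ≤ t, X s ω ≠ 0} with hAdef
  have hg0 : g 0 = 0 := by simp [hgdef]
  have hgnonneg : ∀ x, x ≤ n → 0 ≤ g x := by
    intro x hx
    refine Finset.sum_nonneg fun i hi => ?_
    rw [Finset.mem_Icc] at hi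
    exact le_of_lt (one_div_pos.mpr (hpos i hi.1 (hi.2.trans hx)))
  have hgle : ∀ x, x ≤ n → g x ≤ g n := by
    intro x hx
    refine Finset.sum_le_sum_of_subset_of_nonneg
      (Finset.Icc_subset_Icc_right hx) fun i hi _ => ?_
    rw [Finset.mem_Icc] at hi
    exact le_of_lt (one_div_pos.mpr (hpos i hi.1 hi.2))
  -- measurability and integrability
  have hXm : ∀ t, Measurable (X t) := fun t => (hadapted t).mono (ℱ.le t) le_rfl
  have hXmR : ∀ t, Measurable fun ω => (X t ω : ℝ) := fun t =>
    measurable_from_top.comp (hXm t)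
  have hgXm : ∀ t, Measurable fun ω => g (X t ω) := fun t =>
    (measurable_from_top (f := g)).comp (hXm t)
  have hXint : ∀ t, Integrable (fun ω => (X t ω : ℝ)) μ := by
    intro t
    refine Integrable.mono' (integrable_const (n : ℝ)) (hXmR t).aestronglyMeasurable
      (Filter.Eventually.of_forall fun ω => ?_)
    rw [Real.norm_eq_abs, abs_of_nonneg (Nat.cast_nonneg _)]
    exact_mod_cast hbdd t ω
  have hgXint : ∀ t, Integrable (fun ω => g (X t ω)) μ := by
    intro t
    refine Integrable.mono' (integrable_const (g n)) (hgXm t).aestronglyMeasurable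
      (Filter.Eventually.of_forall fun ω => ?_)
    rw [Real.norm_eq_abs, abs_of_nonneg (hgnonneg _ (hbdd t ω))]
    exact hgle _ (hbdd t ω)
  have hdiffint : ∀ t, Integrable (fun ω => (X t ω : ℝ) - (X (t+1) ω : ℝ)) μ :=
    fun t => (hXint t).sub (hXint (t+1))
  have hAmeasF : ∀ t, MeasurableSet[ℱ t] (A t) := by
    intro t
    have hAeq : A t = ⋂ s ∈ Set.Iic t, X s ⁻¹' {0}ᶜ := by
      ext ω
      simp [hAdef, Set.mem_iInter]
    rw [hAeq]
    exact MeasurableSet.biInter (Set.to_countable _) fun s hs =>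
      (ℱ.mono hs) _ ((hadapted s) (measurableSet_singleton 0).compl)
  have hAmeas : ∀ t, MeasurableSet (A t) := fun t => ℱ.le t _ (hAmeasF t)
  -- core estimate per step
  have claim1 : ∀ t, (μ (A t)).toReal
      ≤ ∫ ω in A t, (g (X t ω) - g (X (t+1) ω)) ∂μ := by
    intro t
    set B : ℕ → Set Ω := fun k => A t ∩ X t ⁻¹' {k} with hBdef
    have hBmeasF : ∀ k, MeasurableSet[ℱ t] (B k) := fun k =>
      (hAmeasF t).inter ((hadapted t) (measurableSet_singleton k))
    have hBmeas : ∀ k, MeasurableSet (B k) := fun k => ℱ.le t _ (hBmeasF k)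
    have hdisj : (↑(Finset.Icc 1 n) : Set ℕ).Pairwise (Function.onFun Disjoint B) := by
      intro i _ j _ hij
      refine Set.disjoint_left.mpr fun ω hωi hωj => hij ?_
      have h1 : X t ω = i := hωi.2
      have h2 : X t ω = j := hωj.2
      rw [← h1, ← h2]
    have hcover : A t = ⋃ k ∈ Finset.Icc 1 n, B k := by
      ext ω
      constructor
      · intro hω
        have h1 : X t ω ≠ 0 := hω t le_rfl
        have hk : X t ω ∈ Finset.Icc 1 n :=
          Finset.mem_Icc.mpr ⟨Nat.one_le_iff_ne_zero.mpr h1, hbdd t ω⟩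
        exact Set.mem_biUnion hk ⟨hω, rfl⟩
      · intro hω
        rcases Set.mem_iUnion₂.mp hω with ⟨k, _, hmem⟩
        exact hmem.1
    have perk : ∀ k ∈ Finset.Icc 1 n, (μ (B k)).toReal
        ≤ ∫ ω in B k, (g (X t ω) - g (X (t+1) ω)) ∂μ := by
      intro k hk
      rw [Finset.mem_Icc] at hk
      have hhk := hpos k hk.1 hk.2
      -- conditional expectation step
      have ha : ∫ ω in B k, ((X t ω : ℝ) - (X (t+1) ω : ℝ)) ∂μ
          = ∫ ω in B k, (μ[fun ω' => (X t ω' : ℝ) - (X (t + 1) ω' : ℝ) | ℱ t]) ω ∂μ :=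
        (setIntegral_condExp (ℱ.le t) (hdiffint t) (hBmeasF k)).symm
      have hb : h k * (μ (B k)).toReal
          ≤ ∫ ω in B k, (μ[fun ω' => (X t ω' : ℝ) - (X (t + 1) ω' : ℝ) | ℱ t]) ω ∂μ := by
        have hconst : ∫ _ω in B k, h k ∂μ = (μ (B k)).toReal • h k :=
          setIntegral_const (h k)
        rw [smul_eq_mul, mul_comm] at hconst
        rw [← hconst]
        refine setIntegral_mono_on_ae ?_ integrable_condExp.integrableOn (hBmeas k) ?_
        · exact integrableOn_const (measure_ne_top μ _)
        · filter_upwards [hdrift t] with ω hω hωB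
          have hXtk : X t ω = k := hωB.2
          have := hω hωB.1
          rwa [hXtk] at this
      have hc : ∫ ω in B k, ((X t ω : ℝ) - (X (t+1) ω : ℝ)) / h k ∂μ
          ≤ ∫ ω in B k, (g (X t ω) - g (X (t+1) ω)) ∂μ := by
        refine setIntegral_mono_on ((hdiffint t).div_const (h k)).integrableOn
          ((hgXint t).sub (hgXint (t+1))).integrableOn (hBmeas k) ?_
        intro ω hω
        have hXtk : X t ω = k := hω.2
        rw [hXtk]
        exact drift_key_sum n h hpos hmono k (X (t+1) ω) hk.1 hk.2 (hbdd (t+1) ω)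
      have hd : ∫ ω in B k, ((X t ω : ℝ) - (X (t+1) ω : ℝ)) / h k ∂μ
          = (∫ ω in B k, ((X t ω : ℝ) - (X (t+1) ω : ℝ)) ∂μ) / h k :=
        integral_div (h k) _
      calc (μ (B k)).toReal = (h k * (μ (B k)).toReal) / h k := by
            field_simp
        _ ≤ (∫ ω in B k, (μ[fun ω' => (X t ω' : ℝ) - (X (t + 1) ω' : ℝ) | ℱ t]) ω ∂μ) / h k :=
            (div_le_div_iff_of_pos_right hhk).mpr hb
        _ = (∫ ω in B k, ((X t ω : ℝ) - (X (t+1) ω : ℝ)) ∂μ) / h k := by rw [ha]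
        _ = ∫ ω in B k, ((X t ω : ℝ) - (X (t+1) ω : ℝ)) / h k ∂μ := hd.symm
        _ ≤ _ := hc
    have hmeasure : (μ (A t)).toReal = ∑ k ∈ Finset.Icc 1 n, (μ (B k)).toReal := by
      rw [hcover, measure_biUnion_finset hdisj (fun k _ => hBmeas k),
        ENNReal.toReal_sum (fun k _ => measure_ne_top μ _)]
    have hintegral : ∫ ω in A t, (g (X t ω) - g (X (t+1) ω)) ∂μ
        = ∑ k ∈ Finset.Icc 1 n, ∫ ω in B k, (g (X t ω) - g (X (t+1) ω)) ∂μ := by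
      rw [hcover]
      exact integral_biUnion_finset _ (fun k _ => hBmeas k) hdisj
        (fun k _ => ((hgXint t).sub (hgXint (t+1))).integrableOn)
    rw [hmeasure, hintegral]
    exact Finset.sum_le_sum perk
  -- telescoping
  have hindid : ∀ t ω, (A t).indicator (fun ω => g (X t ω) - g (X (t+1) ω)) ω
      = (A t).indicator (fun ω => g (X t ω)) ω
        - (A (t+1)).indicator (fun ω => g (X (t+1) ω)) ω := by
    intro t ω
    by_cases h1 : ω ∈ A (t+1)
    · have h2 : ω ∈ A t := fun s hs => h1 s (hs.trans (Nat.le_succ t))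
      rw [Set.indicator_of_mem h1, Set.indicator_of_mem h2, Set.indicator_of_mem h2]
    · by_cases h2 : ω ∈ A t
      · have hX0' : X (t+1) ω = 0 := by
          by_contra hne
          apply h1
          intro s hs
          rcases eq_or_lt_of_le hs with heq | hlt
          · rw [heq]; exact hne
          · exact h2 s (Nat.lt_succ_iff.mp hlt)
        rw [Set.indicator_of_mem h2, Set.indicator_of_mem h2,
          Set.indicator_of_notMem h1, hX0', hg0]
      · have h2' : ω ∉ A (t+1) := h1
        rw [Set.indicator_of_notMem h2, Set.indicator_of_notMem h2,
          Set.indicator_of_notMem h2']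
        ring
  have hindint : ∀ t, Integrable ((A t).indicator (fun ω => g (X t ω))) μ :=
    fun t => (hgXint t).indicator (hAmeas t)
  -- partial sums bounded
  have partial_bound : ∀ N : ℕ,
      ∑ t ∈ Finset.range N, (μ (A t)).toReal ≤ g x₀ := by
    intro N
    have step1 : ∑ t ∈ Finset.range N, (μ (A t)).toReal
        ≤ ∑ t ∈ Finset.range N, ∫ ω, ((A t).indicator (fun ω => g (X t ω)) ω
            - (A (t+1)).indicator (fun ω => g (X (t+1) ω)) ω) ∂μ := by
      refine Finset.sum_le_sum fun t _ => ?_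
      have := claim1 t
      rw [← integral_indicator (hAmeas t)] at this
      refine this.trans (le_of_eq (integral_congr_ae (Filter.Eventually.of_forall
        fun ω => hindid t ω)))
    have step2 : ∑ t ∈ Finset.range N, ∫ ω, ((A t).indicator (fun ω => g (X t ω)) ω
            - (A (t+1)).indicator (fun ω => g (X (t+1) ω)) ω) ∂μ
        = ∫ ω, ((A 0).indicator (fun ω => g (X 0 ω)) ω
            - (A N).indicator (fun ω => g (X N ω)) ω) ∂μ := by
      have hsum := integral_finset_sum (Finset.range N) (μ := μ)
        (f := fun t ω => (A t).indicator (fun ω => g (X t ω)) ω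
          - (A (t+1)).indicator (fun ω => g (X (t+1) ω)) ω)
        (fun t _ => (hindint t).sub (hindint (t+1)))
      rw [← hsum]
      refine integral_congr_ae (Filter.Eventually.of_forall fun ω => ?_)
      exact Finset.sum_range_sub' (fun t => (A t).indicator (fun ω => g (X t ω)) ω) N
    have step3 : ∫ ω, ((A 0).indicator (fun ω => g (X 0 ω)) ω
            - (A N).indicator (fun ω => g (X N ω)) ω) ∂μ ≤ g x₀ := by
      have hconst : ∫ _ω, g x₀ ∂μ = g x₀ := by
        simp
      rw [← hconst]
      refine integral_mono_ae ((hindint 0).sub (hindint N)) (integrable_const _) ?_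
      filter_upwards [hX0] with ω hω0
      have h1 : (A 0).indicator (fun ω => g (X 0 ω)) ω ≤ g x₀ := by
        by_cases hmem : ω ∈ A 0
        · rw [Set.indicator_of_mem hmem, hω0]
        · rw [Set.indicator_of_notMem hmem]
          exact hgnonneg _ hx₀
      have h2 : 0 ≤ (A N).indicator (fun ω => g (X N ω)) ω := by
        by_cases hmem : ω ∈ A N
        · rw [Set.indicator_of_mem hmem]
          exact hgnonneg _ (hbdd N ω)
        · rw [Set.indicator_of_notMem hmem]
      linarith
    calc ∑ t ∈ Finset.range N, (μ (A t)).toReal ≤ _ := step1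
      _ = _ := step2
      _ ≤ g x₀ := step3
  -- conclude in ℝ≥0∞
  have final : ∀ N : ℕ, ∑ t ∈ Finset.range N, μ (A t) ≤ ENNReal.ofReal (g x₀) := by
    intro N
    have : ∑ t ∈ Finset.range N, μ (A t)
        = ENNReal.ofReal (∑ t ∈ Finset.range N, (μ (A t)).toReal) := by
      rw [ENNReal.ofReal_sum_of_nonneg (fun t _ => ENNReal.toReal_nonneg)]
      exact Finset.sum_congr rfl fun t _ =>
        (ENNReal.ofReal_toReal (measure_ne_top μ _)).symm
    rw [this]
    exact ENNReal.ofReal_le_ofReal (partial_bound N)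
  have : ∑' t : ℕ, μ (A t) ≤ ENNReal.ofReal (g x₀) := by
    rw [ENNReal.tsum_eq_iSup_sum' (fun N => Finset.range N)
      (fun s => Finset.exists_nat_subset_range s)]
    exact iSup_le final
  exact this
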